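/- Let G : ℝ → ℝ be three times differentiable and Φ : ℝ → ℝ differentiable, satisfying G‴ + 2G²G′ + 4(G′)² + 2GG″ − 2G′Φ − GΦ′ = 0 on ℝ. Then the function y ↦ −(1/2)G⁴ + (1/2)(G′)² − 2G²G′ − GG″ + ΦG² is constant on ℝ. In particular, for Φ = 0 (the Chazy V equation G‴ + 2G²G′ + 4(G′)² + 2GG″ = 0) the quantity −(1/2)G⁴ + (1/2)(G′)² − 2G²G′ − GG″ is a first integral. -/

import Mathlib

/-- For a three times differentiable `G` and differentiable `Φ`
satisfying `G‴ + 2G²G′ + 4(G′)² + 2GG″ − 2G′Φ − GΦ′ = 0` on `ℝ`, the quantity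
`−(1/2)G⁴ + (1/2)(G′)² − 2G²G′ − GG″ + ΦG²` is constant; in particular for
`Φ = 0` (the Chazy V equation) the quantity
`−(1/2)G⁴ + (1/2)(G′)² − 2G²G′ − GG″` is a first integral. -/
theorem stmt_10 (G Φ : ℝ → ℝ)
    (hG : Differentiable ℝ G) (hG' : Differentiable ℝ (deriv G))
    (hG'' : Differentiable ℝ (deriv (deriv G)))
    (hΦ : Differentiable ℝ Φ)
    (heq : ∀ y : ℝ,
      deriv (deriv (deriv G)) y + 2 * G y ^ 2 * deriv G y + 4 * (deriv G y) ^ 2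
        + 2 * G y * deriv (deriv G) y - 2 * deriv G y * Φ y - G y * deriv Φ y = 0) :
    (∀ y z : ℝ,
      -(1/2) * G y ^ 4 + (1/2) * (deriv G y) ^ 2 - 2 * G y ^ 2 * deriv G y
          - G y * deriv (deriv G) y + Φ y * G y ^ 2 =
      -(1/2) * G z ^ 4 + (1/2) * (deriv G z) ^ 2 - 2 * G z ^ 2 * deriv G z
          - G z * deriv (deriv G) z + Φ z * G z ^ 2) ∧
    ((∀ y : ℝ, Φ y = 0) → ∀ y z : ℝ,
      -(1/2) * G y ^ 4 + (1/2) * (deriv G y) ^ 2 - 2 * G y ^ 2 * deriv G y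
          - G y * deriv (deriv G) y =
      -(1/2) * G z ^ 4 + (1/2) * (deriv G z) ^ 2 - 2 * G z ^ 2 * deriv G z
          - G z * deriv (deriv G) z) := by
  set F : ℝ → ℝ := fun y =>
    -(1/2) * G y ^ 4 + (1/2) * (deriv G y) ^ 2 - 2 * G y ^ 2 * deriv G y
      - G y * deriv (deriv G) y + Φ y * G y ^ 2 with hF
  have key : ∀ y : ℝ, HasDerivAt F 0 y := by
    intro y
    have h1 : HasDerivAt G (deriv G y) y := (hG y).hasDerivAt
    have h2 : HasDerivAt (deriv G) (deriv (deriv G) y) y := (hG' y).hasDerivAt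
    have h3 : HasDerivAt (deriv (deriv G)) (deriv (deriv (deriv G)) y) y :=
      (hG'' y).hasDerivAt
    have h4 : HasDerivAt Φ (deriv Φ y) y := (hΦ y).hasDerivAt
    have hd : HasDerivAt F
        (-(1/2) * (4 * G y ^ 3 * deriv G y)
          + (1/2) * (2 * deriv G y * deriv (deriv G) y)
          - 2 * ((2 * G y * deriv G y) * deriv G y + G y ^ 2 * deriv (deriv G) y)
          - (deriv G y * deriv (deriv G) y + G y * deriv (deriv (deriv G)) y)
          + (deriv Φ y * G y ^ 2 + Φ y * (2 * G y * deriv G y))) y := by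
      have e1 := ((h1.pow 4).const_mul (-(1/2) : ℝ))
      have e2 := ((h2.pow 2).const_mul ((1/2) : ℝ))
      have e3 := (((h1.pow 2).mul h2).const_mul (2 : ℝ))
      have e4 := h1.mul h3
      have e5 := h4.mul (h1.pow 2)
      have := ((((e1.add e2).sub e3).sub e4).add e5)
      convert this using 1
      · rfl
      · rfl
      · funext x; simp only [hF, Pi.add_apply, Pi.sub_apply, Pi.mul_apply, Pi.pow_apply]; ring
      · push_cast [Pi.pow_apply]; ring
    have hz : (-(1/2) * (4 * G y ^ 3 * deriv G y)
          + (1/2) * (2 * deriv G y * deriv (deriv G) y)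
          - 2 * ((2 * G y * deriv G y) * deriv G y + G y ^ 2 * deriv (deriv G) y)
          - (deriv G y * deriv (deriv G) y + G y * deriv (deriv (deriv G)) y)
          + (deriv Φ y * G y ^ 2 + Φ y * (2 * G y * deriv G y))) = 0 := by
      linear_combination (-(G y)) * heq y
    rw [hz] at hd
    exact hd
  have hconst : ∀ y z : ℝ, F y = F z := by
    intro y z
    have := is_const_of_deriv_eq_zero (f := F)
      (fun x => (key x).differentiableAt) (fun x => (key x).deriv) y z
    exact this
  constructor
  · intro y z
    exact hconst y z
  · intro hΦ0 y z
    have := hconst y z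
    simp only [hF, hΦ0] at this
    linarith [this]
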